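/- Failure of 3-amalgamation in Hilbert spaces: in ℝ³ with the standard inner product, let a = (1,0,0), a' = (0,1,0), b = (1,0,1), c = (0,1,1), d = (1/2, 1/2, 2), and suppose V is a real vector space with a bilinear form extending the inner product via maps g, h from two copies of ℝ³ and i from a third copy, commuting appropriately and with a* := g(a) = h(a'). Then for v = 2(b + c − d) one has [a* − v, a* − v] = −3; in particular the form on V is not positive definite and V is not an inner product space. -/

import Mathlib

/-- Failure of 3-amalgamation in Hilbert spaces: with `a = (1,0,0)`, `a' = (0,1,0)`,
`b = (1,0,1)`, `c = (0,1,1)`, `d = (1/2,1/2,2)` in `ℝ³`, if a bilinear space `V` receives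
form-preserving linear maps `g, h, i` from copies of `ℝ³` with `g` and `i` agreeing on
`b, d`, `h` and `i` agreeing on `c, d`, and `g a = h a'`, then for `a* = g a` and
`v = 2(b + c - d)` (mapped into `V`) one has `[a* - v, a* - v] = -3`; in particular the
form on `V` is not positive definite. -/
theorem hilbert_three_amalgamation_fails
    {V : Type*} [AddCommGroup V] [Module ℝ V] (B : V →ₗ[ℝ] V →ₗ[ℝ] ℝ)
    (g h i : (Fin 3 → ℝ) →ₗ[ℝ] V)
    (hg : ∀ x y : Fin 3 → ℝ, B (g x) (g y) = x 0 * y 0 + x 1 * y 1 + x 2 * y 2)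
    (hh : ∀ x y : Fin 3 → ℝ, B (h x) (h y) = x 0 * y 0 + x 1 * y 1 + x 2 * y 2)
    (hi : ∀ x y : Fin 3 → ℝ, B (i x) (i y) = x 0 * y 0 + x 1 * y 1 + x 2 * y 2)
    (hgb : g ![1, 0, 1] = i ![1, 0, 1])
    (hgd : g ![1/2, 1/2, 2] = i ![1/2, 1/2, 2])
    (hhc : h ![0, 1, 1] = i ![0, 1, 1])
    (hhd : h ![1/2, 1/2, 2] = i ![1/2, 1/2, 2])
    (hga : g ![1, 0, 0] = h ![0, 1, 0]) :
    (B (g ![1, 0, 0] - (2 : ℝ) • (i ![1, 0, 1] + i ![0, 1, 1] - i ![1/2, 1/2, 2]))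
       (g ![1, 0, 0] - (2 : ℝ) • (i ![1, 0, 1] + i ![0, 1, 1] - i ![1/2, 1/2, 2])) = -3) ∧
    ¬ (∀ x : V, x ≠ 0 → 0 < B x x) := by
  have aa : B (g ![1, 0, 0]) (g ![1, 0, 0]) = 1 := by rw [hg]; norm_num [Matrix.cons_val_two, Matrix.tail_cons, Matrix.head_cons]
  have ab : B (g ![1, 0, 0]) (i ![1, 0, 1]) = 1 := by rw [← hgb, hg]; norm_num [Matrix.cons_val_two, Matrix.tail_cons, Matrix.head_cons]
  have ba : B (i ![1, 0, 1]) (g ![1, 0, 0]) = 1 := by rw [← hgb, hg]; norm_num [Matrix.cons_val_two, Matrix.tail_cons, Matrix.head_cons]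
  have ac : B (g ![1, 0, 0]) (i ![0, 1, 1]) = 1 := by rw [hga, ← hhc, hh]; norm_num [Matrix.cons_val_two, Matrix.tail_cons, Matrix.head_cons]
  have ca : B (i ![0, 1, 1]) (g ![1, 0, 0]) = 1 := by rw [hga, ← hhc, hh]; norm_num [Matrix.cons_val_two, Matrix.tail_cons, Matrix.head_cons]
  have ad : B (g ![1, 0, 0]) (i ![1/2, 1/2, 2]) = 1/2 := by rw [← hgd, hg]; norm_num [Matrix.cons_val_two, Matrix.tail_cons, Matrix.head_cons]
  have da : B (i ![1/2, 1/2, 2]) (g ![1, 0, 0]) = 1/2 := by rw [← hgd, hg]; norm_num [Matrix.cons_val_two, Matrix.tail_cons, Matrix.head_cons]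
  have key : B (g ![1, 0, 0] - (2 : ℝ) • (i ![1, 0, 1] + i ![0, 1, 1] - i ![1/2, 1/2, 2]))
       (g ![1, 0, 0] - (2 : ℝ) • (i ![1, 0, 1] + i ![0, 1, 1] - i ![1/2, 1/2, 2])) = -3 := by
    simp only [map_sub, map_add, map_smul, LinearMap.sub_apply, LinearMap.add_apply,
      LinearMap.smul_apply, smul_eq_mul, aa, ab, ba, ac, ca, ad, da, hi]
    norm_num [Matrix.cons_val_two, Matrix.tail_cons, Matrix.head_cons]
  refine ⟨key, fun hpos => ?_⟩
  set w := g ![1, 0, 0] - (2 : ℝ) • (i ![1, 0, 1] + i ![0, 1, 1] - i ![1/2, 1/2, 2]) with hw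
  have hne : w ≠ 0 := by
    intro h0
    rw [h0] at key
    simp at key
  have := hpos w hne
  rw [key] at this
  linarith
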